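/- arXiv:2507.14410 — 5 statements merged into one kernel-verified Lean document; each statement's English description precedes it below -/
import Mathlib

section
/- If m and n are positive integers with θ_n / p_n = θ_m / p_m, then m = n, where θ_n = ∑_{i=1}^n ln(p_i). -/
noncomputable def p (n : ℕ) : ℕ := Nat.nth Nat.Prime (n - 1)

noncomputable def θ (n : ℕ) : ℝ := ∑ i ∈ Finset.Icc 1 n, Real.log (p i)

lemma p_prime (n : ℕ) : (p n).Prime := Nat.prime_nth_prime _

lemma p_pos (n : ℕ) : 0 < p n := (p_prime n).pos

noncomputable def PP (n : ℕ) : ℕ := ∏ i ∈ Finset.Icc 1 n, p i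

lemma PP_pos (n : ℕ) : 0 < PP n := Finset.prod_pos (fun i _ => p_pos i)

lemma θ_eq (n : ℕ) : θ n = Real.log (PP n) := by
  rw [PP, Nat.cast_prod, Real.log_prod]
  · rfl
  · intro i _
    exact_mod_cast (p_pos i).ne'

lemma p_lt_p {i n : ℕ} (hi : 1 ≤ i) (h : i < n) : p i < p n := by
  have : i - 1 < n - 1 := by omega
  exact (Nat.nth_lt_nth Nat.infinite_setOf_prime).mpr this

lemma key {m n : ℕ} (hm : 1 ≤ m) (h : m < n) : (PP n) ^ (p m) ≠ (PP m) ^ (p n) := by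
  intro heq
  have hq : (p n) ∣ PP n := Finset.dvd_prod_of_mem p (by simp; omega)
  have h1 : (p n) ∣ (PP m) ^ (p n) := by
    rw [← heq]; exact hq.trans (dvd_pow_self _ (p_pos m).ne')
  have h2 : (p n) ∣ PP m := (p_prime n).prime.dvd_of_dvd_pow h1
  obtain ⟨i, hi, hdvd⟩ := Prime.exists_mem_finset_dvd (p_prime n).prime h2
  have heqp : p n = p i := ((Nat.prime_dvd_prime_iff_eq (p_prime n) (p_prime i)).mp hdvd)
  simp only [Finset.mem_Icc] at hi
  have : p i < p n := p_lt_p hi.1 (by omega)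
  omega

theorem stmt2 : ∀ m n : ℕ, 1 ≤ m → 1 ≤ n → θ n / (p n : ℝ) = θ m / (p m : ℝ) → m = n := by
  intro m n hm hn h
  have hpn : (0:ℝ) < p n := by exact_mod_cast p_pos n
  have hpm : (0:ℝ) < p m := by exact_mod_cast p_pos m
  rw [div_eq_div_iff hpn.ne' hpm.ne', θ_eq, θ_eq] at h
  have hlog : Real.log ((PP n : ℝ) ^ (p m)) = Real.log ((PP m : ℝ) ^ (p n)) := by
    rw [Real.log_pow, Real.log_pow]
    push_cast
    linarith [h]
  have hPPn : (0:ℝ) < PP n := by exact_mod_cast PP_pos n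
  have hPPm : (0:ℝ) < PP m := by exact_mod_cast PP_pos m
  have heq : (PP n : ℝ) ^ (p m) = (PP m : ℝ) ^ (p n) :=
    Real.log_injOn_pos (Set.mem_Ioi.mpr (pow_pos hPPn _)) (Set.mem_Ioi.mpr (pow_pos hPPm _)) hlog
  have heqn : (PP n) ^ (p m) = (PP m) ^ (p n) := by exact_mod_cast heq
  rcases lt_trichotomy m n with hlt | heqmn | hgt
  · exact absurd heqn (key hm hlt)
  · exact heqmn
  · exact absurd heqn.symm (key hn hgt)
end

section
/- For all n ≥ 1, θ_n > n(ln n - 1/2), where θ_n = ∑_{i=1}^n ln(p_i). -/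
open Real Finset

lemma nth_eq_of (m k : ℕ) (h : Nat.count Nat.Prime m = k) (hp : Nat.Prime m) :
    Nat.nth Nat.Prime k = m := by
  rw [← h]; exact Nat.nth_count hp

lemma nth0 : Nat.nth Nat.Prime 0 = 2 := nth_eq_of 2 0 (by decide) (by norm_num)
lemma nth1 : Nat.nth Nat.Prime 1 = 3 := nth_eq_of 3 1 (by decide) (by norm_num)
lemma nth2 : Nat.nth Nat.Prime 2 = 5 := nth_eq_of 5 2 (by decide) (by norm_num)
lemma nth3 : Nat.nth Nat.Prime 3 = 7 := nth_eq_of 7 3 (by decide) (by norm_num)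
lemma nth4 : Nat.nth Nat.Prime 4 = 11 := nth_eq_of 11 4 (by decide) (by norm_num)

lemma prime_gap (k : ℕ) (hk : 1 ≤ k) :
    Nat.nth Nat.Prime k + 2 ≤ Nat.nth Nat.Prime (k + 1) := by
  have hinf := Nat.infinite_setOf_prime
  have hab : Nat.nth Nat.Prime k < Nat.nth Nat.Prime (k + 1) :=
    (Nat.nth_lt_nth hinf).mpr (lt_add_one k)
  have ha : Nat.Prime (Nat.nth Nat.Prime k) := Nat.prime_nth_prime k
  have hb : Nat.Prime (Nat.nth Nat.Prime (k + 1)) := Nat.prime_nth_prime (k + 1)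
  have h3 : 3 ≤ Nat.nth Nat.Prime k := by
    calc 3 = Nat.nth Nat.Prime 1 := nth1.symm
    _ ≤ Nat.nth Nat.Prime k := (Nat.nth_le_nth hinf).mpr hk
  by_contra h
  push_neg at h
  have heq : Nat.nth Nat.Prime (k + 1) = Nat.nth Nat.Prime k + 1 := by omega
  have hodd : Odd (Nat.nth Nat.Prime k) := ha.odd_of_ne_two (by omega)
  have heven : Even (Nat.nth Nat.Prime (k + 1)) := by
    rw [heq]; exact Odd.add_one hodd
  have := (Nat.Prime.even_iff hb).mp heven
  omega

lemma nth_lb : ∀ k : ℕ, 4 ≤ k → 2 * k + 2 ≤ Nat.nth Nat.Prime k := by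
  intro k hk
  induction k, hk using Nat.le_induction with
  | base =>
    rw [nth4]
    omega
  | succ n hn ih =>
    have := prime_gap n (by omega)
    omega

lemma p_lb (i : ℕ) (hi : 5 ≤ i) : 2 * i ≤ p i := by
  have h := nth_lb (i - 1) (by omega)
  unfold p
  omega


lemma sum1' (f : ℕ → ℝ) : ∑ i ∈ Finset.Icc 1 1, f i = f 1 := by
  show f 1 + 0 = _; ring
lemma sum2' (f : ℕ → ℝ) : ∑ i ∈ Finset.Icc 1 2, f i = f 1 + f 2 := by
  show f 1 + (f 2 + 0) = _; ring
lemma sum3' (f : ℕ → ℝ) : ∑ i ∈ Finset.Icc 1 3, f i = f 1 + f 2 + f 3 := by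
  show f 1 + (f 2 + (f 3 + 0)) = _; ring
lemma sum4' (f : ℕ → ℝ) : ∑ i ∈ Finset.Icc 1 4, f i = f 1 + f 2 + f 3 + f 4 := by
  show f 1 + (f 2 + (f 3 + (f 4 + 0))) = _; ring

-- sum lower bound: θ n ≥ ∑ log (2 i) + (log 35 - log 64) for n ≥ 1
lemma sum_lb : ∀ n : ℕ, 1 ≤ n →
    θ n ≥ ∑ i ∈ Icc (1:ℕ) n, Real.log (2 * (i : ℝ)) + (Real.log 35 - Real.log 64) := by
  have base4 : θ 4 = ∑ i ∈ Icc (1:ℕ) 4, Real.log (2 * (i : ℝ)) + (Real.log 35 - Real.log 64) := by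
    unfold θ
    rw [sum4', sum4']
    norm_num [p, nth0, nth1, nth2, nth3]
    have l4 : Real.log 4 = Real.log 2 + Real.log 2 := by
      rw [show (4:ℝ) = 2 * 2 by norm_num, Real.log_mul (by norm_num) (by norm_num)]
    have l6 : Real.log 6 = Real.log 2 + Real.log 3 := by
      rw [show (6:ℝ) = 2 * 3 by norm_num, Real.log_mul (by norm_num) (by norm_num)]
    have l8 : Real.log 8 = Real.log 2 + Real.log 4 := by
      rw [show (8:ℝ) = 2 * 4 by norm_num, Real.log_mul (by norm_num) (by norm_num)]
    have l35 : Real.log 35 = Real.log 5 + Real.log 7 := by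
      rw [show (35:ℝ) = 5 * 7 by norm_num, Real.log_mul (by norm_num) (by norm_num)]
    have l64 : Real.log 64 = Real.log 8 + Real.log 8 := by
      rw [show (64:ℝ) = 8 * 8 by norm_num, Real.log_mul (by norm_num) (by norm_num)]
    linarith
  have big : ∀ n : ℕ, 4 ≤ n →
      θ n ≥ ∑ i ∈ Icc (1:ℕ) n, Real.log (2 * (i : ℝ)) + (Real.log 35 - Real.log 64) := by
    intro n hn
    induction n, hn using Nat.le_induction with
    | base => exact base4.ge
    | succ n hn ih =>
      unfold θ at ih ⊢
      rw [Finset.sum_Icc_succ_top (by omega), Finset.sum_Icc_succ_top (by omega)]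
      have hp : (2 * ((n:ℝ) + 1)) ≤ ((p (n + 1) : ℕ) : ℝ) := by
        have := p_lb (n + 1) (by omega)
        push_cast
        exact_mod_cast this
      have hlog : Real.log (2 * ((n:ℝ) + 1)) ≤ Real.log ((p (n + 1) : ℕ) : ℝ) :=
        Real.log_le_log (by positivity) hp
      push_cast at hlog ⊢
      linarith
  intro n hn
  match n, hn with
  | 1, _ =>
    unfold θ; rw [sum1', sum1']
    norm_num [p, nth0]
    have : Real.log 35 ≤ Real.log 64 := Real.log_le_log (by norm_num) (by norm_num)
    linarith
  | 2, _ =>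
    unfold θ; rw [sum2', sum2']
    norm_num [p, nth0, nth1]
    -- log 2 + log 3 ≥ log 2 + log 4 + log 35 - log 64
    have h1 : Real.log 3 + Real.log 64 = Real.log 192 := by
      rw [← Real.log_mul (by norm_num) (by norm_num)]; norm_num
    have h2 : Real.log 4 + Real.log 35 = Real.log 140 := by
      rw [← Real.log_mul (by norm_num) (by norm_num)]; norm_num
    have h3 : Real.log 140 ≤ Real.log 192 := Real.log_le_log (by norm_num) (by norm_num)
    linarith
  | 3, _ =>
    unfold θ; rw [sum3', sum3']
    norm_num [p, nth0, nth1, nth2]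
    have h1 : Real.log 3 + Real.log 5 + Real.log 64 = Real.log 960 := by
      rw [← Real.log_mul (by norm_num) (by norm_num),
        ← Real.log_mul (by norm_num) (by norm_num)]
      norm_num
    have h2 : Real.log 4 + Real.log 6 + Real.log 35 = Real.log 840 := by
      rw [← Real.log_mul (by norm_num) (by norm_num),
        ← Real.log_mul (by norm_num) (by norm_num)]
      norm_num
    have h3 : Real.log 840 ≤ Real.log 960 := Real.log_le_log (by norm_num) (by norm_num)
    linarith
  | (m + 4), _ => exact big (m + 4) (by omega)

lemma sum_log_two_mul (n : ℕ) :
    ∑ i ∈ Icc (1:ℕ) n, Real.log (2 * (i : ℝ))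
      = n * Real.log 2 + Real.log (Nat.factorial n) := by
  have h1 : ∀ i ∈ Icc (1:ℕ) n, Real.log (2 * (i : ℝ)) = Real.log 2 + Real.log (i : ℝ) := by
    intro i hi
    have hi1 : 1 ≤ i := (Finset.mem_Icc.mp hi).1
    have : (0:ℝ) < (i : ℝ) := by exact_mod_cast hi1
    rw [Real.log_mul (by norm_num) (ne_of_gt this)]
  rw [Finset.sum_congr rfl h1, Finset.sum_add_distrib, Finset.sum_const, Nat.card_Icc]
  have h2 : Real.log ((Nat.factorial n : ℕ) : ℝ) = ∑ i ∈ Icc 1 n, Real.log (i : ℝ) := by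
    rw [← Finset.prod_Ico_id_eq_factorial n, Finset.Ico_add_one_right_eq_Icc]
    push_cast
    rw [Real.log_prod]
    intro i hi
    have hi1 : 1 ≤ i := (Finset.mem_Icc.mp hi).1
    have : (0:ℝ) < (i : ℝ) := by exact_mod_cast hi1
    exact ne_of_gt this
  rw [h2]
  simp [nsmul_eq_mul]

lemma log_factorial_lb : ∀ n : ℕ, 1 ≤ n →
    (n : ℝ) * Real.log n - n + 1 ≤ Real.log (Nat.factorial n) := by
  intro n hn
  induction n, hn using Nat.le_induction with
  | base => simp
  | succ n hn ih =>
    have hn0 : (0:ℝ) < (n:ℝ) := by exact_mod_cast hn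
    have hfp : (0:ℝ) < ((Nat.factorial n : ℕ) : ℝ) := by exact_mod_cast Nat.factorial_pos n
    have hfact : ((Nat.factorial (n+1) : ℕ) : ℝ) = ((n:ℝ)+1) * ((Nat.factorial n : ℕ) : ℝ) := by
      rw [Nat.factorial_succ]; push_cast; ring
    rw [hfact, Real.log_mul (by positivity) (ne_of_gt hfp)]
    have key : Real.log ((n:ℝ)+1) - Real.log (n:ℝ) ≤ 1/(n:ℝ) := by
      have h := Real.log_le_sub_one_of_pos (show (0:ℝ) < ((n:ℝ)+1)/(n:ℝ) by positivity)
      rw [Real.log_div (by positivity) (ne_of_gt hn0)] at h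
      have e : ((n:ℝ)+1)/(n:ℝ) - 1 = 1/(n:ℝ) := by field_simp; ring
      linarith
    have key2 : (n:ℝ) * (Real.log ((n:ℝ)+1) - Real.log (n:ℝ)) ≤ 1 := by
      have h := mul_le_mul_of_nonneg_left key hn0.le
      rw [mul_one_div, div_self (ne_of_gt hn0)] at h
      exact h
    push_cast
    nlinarith [key2, ih]

lemma half_lt_log_two : (1:ℝ)/2 < Real.log 2 := by
  have he : Real.exp 1 < 4 := lt_trans Real.exp_one_lt_d9 (by norm_num)
  have h := Real.log_lt_log (Real.exp_pos 1) he
  rw [Real.log_exp] at h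
  have l4 : Real.log 4 = Real.log 2 + Real.log 2 := by
    rw [show (4:ℝ) = 2 * 2 by norm_num, Real.log_mul (by norm_num) (by norm_num)]
  linarith

theorem stmt6 : ∀ n : ℕ, 1 ≤ n → θ n > (n : ℝ) * (Real.log n - 1/2) := by
  intro n hn
  have h1 := sum_lb n hn
  rw [sum_log_two_mul] at h1
  have h2 := log_factorial_lb n hn
  have hl2 := half_lt_log_two
  have hn1 : (1:ℝ) ≤ (n:ℝ) := by exact_mod_cast hn
  have hmul : (Real.log 2 - 1/2) * 1 ≤ (Real.log 2 - 1/2) * (n:ℝ) :=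
    mul_le_mul_of_nonneg_left hn1 (by linarith)
  have h70 : Real.log 2 + Real.log 35 = Real.log 70 := by
    rw [← Real.log_mul (by norm_num) (by norm_num)]; norm_num
  have h6470 : Real.log 64 ≤ Real.log 70 := Real.log_le_log (by norm_num) (by norm_num)
  nlinarith [h1, h2, hmul]
end

section
/- For all n ≥ 13, θ_n ≥ n ln n, where θ_n = ∑_{i=1}^n ln(p_i). -/
set_option maxRecDepth 10000

lemma count_le_aux : ∀ k : ℕ, 14 ≤ k → Nat.count Nat.Prime (3 * k) ≤ k - 1 := by
  intro k hk
  by_cases hks : k ≤ 53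
  · exact (by decide : ∀ k ∈ Finset.Icc 14 53, Nat.count Nat.Prime (3*k) ≤ k - 1)
      k (Finset.mem_Icc.mpr ⟨hk, hks⟩)
  · push_neg at hks
    have h30 : Nat.totient 30 = 8 := by decide
    have h31 : Nat.count Nat.Prime 31 = 10 := by decide
    have key := Nat.primeCounting'_add_le (a := 30) (k := 31) (n := 3 * k - 31)
      (by norm_num) (by norm_num)
    rw [show 31 + (3 * k - 31) = 3 * k by omega] at key
    simp only [Nat.primeCounting'] at key
    rw [h31, h30] at key
    omega

lemma nth_prime_ge : ∀ k : ℕ, 14 ≤ k → 3 * k ≤ p k := by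
  intro k hk
  have h := count_le_aux k hk
  have := (Nat.count_le_iff_le_nth Nat.infinite_setOf_prime
      (a := 3 * k) (b := k - 1)).mp h
  exact this

lemma pow_succ_le : ∀ n : ℕ, 1 ≤ n → (n + 1) ^ n ≤ 3 * n ^ n := by
  intro n hn
  have hn0 : (n : ℝ) ≠ 0 := by positivity
  have h1 : (1 + 1 / (n : ℝ)) ^ n ≤ 3 := by
    have h2 : (1 + 1 / (n : ℝ)) ^ n ≤ Real.exp (1 / n) ^ n := by
      apply pow_le_pow_left₀ (by positivity)
      linarith [Real.add_one_le_exp (1 / (n : ℝ))]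
    have h3 : Real.exp (1 / (n : ℝ)) ^ n = Real.exp 1 := by
      rw [← Real.exp_nat_mul]
      congr 1
      field_simp
    rw [h3] at h2
    linarith [Real.exp_one_lt_d9]
  have hcast : ((n : ℝ) + 1) ^ n ≤ 3 * (n : ℝ) ^ n := by
    have : ((n : ℝ) + 1) = (n : ℝ) * (1 + 1 / n) := by field_simp
    rw [this, mul_pow]
    calc (n : ℝ) ^ n * (1 + 1 / (n:ℝ)) ^ n ≤ (n : ℝ) ^ n * 3 := by
          apply mul_le_mul_of_nonneg_left h1 (by positivity)
      _ = 3 * (n : ℝ) ^ n := by ring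
  exact_mod_cast hcast

lemma prod_ge : ∀ n : ℕ, 13 ≤ n → n ^ n ≤ ∏ i ∈ Finset.Icc 1 n, p i := by
  intro n hn
  induction n, hn using Nat.le_induction with
  | base =>
    have h2 : Nat.nth Nat.Prime 0 = 2 := by
      rw [show 0 = Nat.count Nat.Prime 2 from by decide]; exact Nat.nth_count (by norm_num)
    have h3 : Nat.nth Nat.Prime 1 = 3 := by
      rw [show 1 = Nat.count Nat.Prime 3 from by decide]; exact Nat.nth_count (by norm_num)
    have h5 : Nat.nth Nat.Prime 2 = 5 := by
      rw [show 2 = Nat.count Nat.Prime 5 from by decide]; exact Nat.nth_count (by norm_num)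
    have h7 : Nat.nth Nat.Prime 3 = 7 := by
      rw [show 3 = Nat.count Nat.Prime 7 from by decide]; exact Nat.nth_count (by norm_num)
    have h11 : Nat.nth Nat.Prime 4 = 11 := by
      rw [show 4 = Nat.count Nat.Prime 11 from by decide]; exact Nat.nth_count (by norm_num)
    have h13 : Nat.nth Nat.Prime 5 = 13 := by
      rw [show 5 = Nat.count Nat.Prime 13 from by decide]; exact Nat.nth_count (by norm_num)
    have h17 : Nat.nth Nat.Prime 6 = 17 := by
      rw [show 6 = Nat.count Nat.Prime 17 from by decide]; exact Nat.nth_count (by norm_num)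
    have h19 : Nat.nth Nat.Prime 7 = 19 := by
      rw [show 7 = Nat.count Nat.Prime 19 from by decide]; exact Nat.nth_count (by norm_num)
    have h23 : Nat.nth Nat.Prime 8 = 23 := by
      rw [show 8 = Nat.count Nat.Prime 23 from by decide]; exact Nat.nth_count (by norm_num)
    have h29 : Nat.nth Nat.Prime 9 = 29 := by
      rw [show 9 = Nat.count Nat.Prime 29 from by decide]; exact Nat.nth_count (by norm_num)
    have h31 : Nat.nth Nat.Prime 10 = 31 := by
      rw [show 10 = Nat.count Nat.Prime 31 from by decide]; exact Nat.nth_count (by norm_num)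
    have h37 : Nat.nth Nat.Prime 11 = 37 := by
      rw [show 11 = Nat.count Nat.Prime 37 from by decide]; exact Nat.nth_count (by norm_num)
    have h41 : Nat.nth Nat.Prime 12 = 41 := by
      rw [show 12 = Nat.count Nat.Prime 41 from by decide]; exact Nat.nth_count (by norm_num)
    have hIcc : Finset.Icc 1 13 = Finset.Ico 1 14 := rfl
    rw [hIcc, Finset.prod_Ico_eq_prod_range]
    simp only [Finset.prod_range_succ, Finset.prod_range_zero, p]
    norm_num [h2, h3, h5, h7, h11, h13, h17, h19, h23, h29, h31, h37, h41]
  | succ n hn ih =>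
    rw [Finset.prod_Icc_succ_top (by omega : 1 ≤ n + 1)]
    have hp : 3 * (n + 1) ≤ p (n + 1) := nth_prime_ge (n + 1) (by omega)
    calc (n + 1) ^ (n + 1) = (n + 1) ^ n * (n + 1) := by ring
      _ ≤ 3 * n ^ n * (n + 1) := Nat.mul_le_mul_right _ (pow_succ_le n (by omega))
      _ = n ^ n * (3 * (n + 1)) := by ring
      _ ≤ (∏ i ∈ Finset.Icc 1 n, p i) * p (n + 1) := Nat.mul_le_mul ih hp

theorem stmt7 : ∀ n : ℕ, 13 ≤ n → θ n ≥ (n : ℝ) * Real.log n := by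
  intro n hn
  have hppos : ∀ i ∈ Finset.Icc 1 n, (p i : ℝ) ≠ 0 := by
    intro i _
    have := (Nat.prime_nth_prime (i - 1)).pos
    simp only [p]
    positivity
  have hθ : θ n = Real.log (∏ i ∈ Finset.Icc 1 n, (p i : ℝ)) := by
    unfold θ
    exact (Real.log_prod hppos).symm
  have hprod : ((n : ℝ)) ^ n ≤ ∏ i ∈ Finset.Icc 1 n, (p i : ℝ) := by
    have := prod_ge n hn
    push_cast
    exact_mod_cast this
  have hnpos : (0 : ℝ) < (n : ℝ) ^ n := by
    have : 0 < n := by omega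
    positivity
  calc (n : ℝ) * Real.log n = Real.log ((n : ℝ) ^ n) := by rw [Real.log_pow]
    _ ≤ Real.log (∏ i ∈ Finset.Icc 1 n, (p i : ℝ)) := Real.log_le_log hnpos hprod
    _ = θ n := hθ.symm
end

section
/- For all n ≥ 1, the relative gap satisfies (θ_{n+1} - θ_n)/θ_n > (9/10)/n, where θ_n = ∑_{i=1}^n ln(p_i). -/
theorem stmt10 : ∀ n : ℕ, 1 ≤ n → (θ (n+1) - θ n) / θ n > (9/10) / (n : ℝ) := by
  intro n hn
  have hp2 : ∀ i : ℕ, 2 ≤ p i := fun i => (Nat.prime_nth_prime (i - 1)).two_le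
  have hlogpos : ∀ i : ℕ, 0 < Real.log (p i) := by
    intro i
    apply Real.log_pos
    exact_mod_cast Nat.lt_of_lt_of_le one_lt_two (hp2 i)
  have hθdiff : θ (n + 1) - θ n = Real.log (p (n + 1)) := by
    unfold θ
    rw [Finset.sum_Icc_succ_top (by omega : 1 ≤ n + 1)]
    ring
  have hθpos : 0 < θ n :=
    Finset.sum_pos (fun i _ => hlogpos i) ⟨1, by simp [hn]⟩
  have hmono : ∀ i ∈ Finset.Icc 1 n, Real.log (p i) ≤ Real.log (p (n + 1)) := by
    intro i hi
    simp only [Finset.mem_Icc] at hi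
    apply Real.log_le_log (by exact_mod_cast Nat.lt_of_lt_of_le Nat.zero_lt_two (hp2 i))
    have : p i ≤ p (n + 1) := by
      unfold p
      exact Nat.nth_monotone Nat.infinite_setOf_prime (by omega)
    exact_mod_cast this
  have hsum : θ n ≤ (n : ℝ) * Real.log (p (n + 1)) := by
    have := Finset.sum_le_card_nsmul (Finset.Icc 1 n) (fun i => Real.log (p i))
      (Real.log (p (n + 1))) hmono
    simpa [θ, Nat.card_Icc, nsmul_eq_mul] using this
  have hnpos : (0 : ℝ) < n := by exact_mod_cast hn
  rw [gt_iff_lt, div_lt_div_iff₀ hnpos hθpos, hθdiff]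
  nlinarith [hlogpos (n + 1)]
end

section
/- θ-analogue of the Andrica conjecture: for all n ≥ 1, √θ_{n+1} - √θ_n < 1, where θ_n = ∑_{i=1}^n ln(p_i). -/
lemma p_two_le (n : ℕ) : 2 ≤ p n := (p_prime n).two_le

lemma p_mono {i j : ℕ} (h : i ≤ j) : p i ≤ p j :=
  Nat.nth_monotone Nat.infinite_setOf_prime (Nat.sub_le_sub_right h 1)

lemma nth_bertrand (m : ℕ) :
    Nat.nth Nat.Prime (m + 1) ≤ 2 * Nat.nth Nat.Prime m := by
  obtain ⟨q, hq, hlt, hle⟩ :=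
    Nat.exists_prime_lt_and_le_two_mul (Nat.nth Nat.Prime m)
      (Nat.nth_mem_of_infinite Nat.infinite_setOf_prime m).pos.ne'
  refine le_trans ?_ hle
  have hcq : m + 1 ≤ Nat.count Nat.Prime q := by
    have h1 : Nat.count Nat.Prime (Nat.nth Nat.Prime m + 1) = m + 1 :=
      Nat.count_nth_succ_of_infinite Nat.infinite_setOf_prime m
    calc m + 1 = Nat.count Nat.Prime (Nat.nth Nat.Prime m + 1) := h1.symm
      _ ≤ Nat.count Nat.Prime q := Nat.count_monotone _ hlt
  calc Nat.nth Nat.Prime (m + 1) ≤ Nat.nth Nat.Prime (Nat.count Nat.Prime q) :=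
        Nat.nth_monotone Nat.infinite_setOf_prime hcq
    _ = q := Nat.nth_count hq

lemma p_bertrand {j : ℕ} (hj : 1 ≤ j) : p (j + 1) ≤ 2 * p j := by
  obtain ⟨m, rfl⟩ := Nat.exists_eq_add_of_le hj
  have h1 : (1 + m + 1) - 1 = m + 1 := by omega
  have h2 : (1 + m) - 1 = m := by omega
  simpa [p, h1, h2] using nth_bertrand m

lemma p_shift {j : ℕ} (hj : 1 ≤ j) : ∀ k : ℕ, p (j + k) ≤ 2 ^ k * p j := by
  intro k
  induction k with
  | zero => simp
  | succ k ih =>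
    have h1 : p (j + k + 1) ≤ 2 * p (j + k) := p_bertrand (by omega)
    calc p (j + (k + 1)) = p (j + k + 1) := by ring_nf
      _ ≤ 2 * p (j + k) := h1
      _ ≤ 2 * (2 ^ k * p j) := by exact Nat.mul_le_mul_left 2 ih
      _ = 2 ^ (k + 1) * p j := by ring

lemma log_p_nonneg (i : ℕ) : 0 ≤ Real.log (p i) :=
  Real.log_nonneg (by exact_mod_cast (p_two_le i).trans' (by norm_num))

lemma theta_pos {n : ℕ} (hn : 1 ≤ n) : 0 < θ n := by
  have h1 : (1 : ℕ) ∈ Finset.Icc 1 n := by simp [hn]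
  have h2 : Real.log (p 1) ≤ θ n :=
    Finset.single_le_sum (fun i _ => log_p_nonneg i) h1
  have h3 : p 1 = 2 := by simp [p, Nat.nth_prime_zero_eq_two]
  have : (0 : ℝ) < Real.log 2 := Real.log_pos (by norm_num)
  rw [h3] at h2; norm_num at h2; linarith

lemma theta_lt_sq {n : ℕ} (hn : 1 ≤ n) : θ n < (n : ℝ) ^ 2 := by
  have hlog2 : Real.log 2 < 1 := by have := Real.log_two_lt_d9; linarith
  have hbound : ∀ i ∈ Finset.Icc 1 n, Real.log (p i) ≤ (n : ℝ) * Real.log 2 := by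
    intro i hi
    simp only [Finset.mem_Icc] at hi
    have hpi : p i ≤ 2 ^ i := by
      have := p_shift (j := 1) le_rfl (i - 1)
      have h1 : 1 + (i - 1) = i := by omega
      have h3 : p 1 = 2 := by simp [p, Nat.nth_prime_zero_eq_two]
      rw [h1, h3] at this
      calc p i ≤ 2 ^ (i - 1) * 2 := this
        _ = 2 ^ (i - 1 + 1) := by ring
        _ = 2 ^ i := by rw [show i - 1 + 1 = i by omega]
    calc Real.log (p i) ≤ Real.log ((2 : ℝ) ^ i) := by
          apply Real.log_le_log (by exact_mod_cast (p_prime i).pos)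
          exact_mod_cast hpi
      _ = (i : ℝ) * Real.log 2 := by rw [Real.log_pow]
      _ ≤ (n : ℝ) * Real.log 2 := by
          apply mul_le_mul_of_nonneg_right _ (Real.log_nonneg (by norm_num))
          exact_mod_cast hi.2
  have h := Finset.sum_le_card_nsmul (Finset.Icc 1 n) (fun i => Real.log (p i))
      ((n : ℝ) * Real.log 2) hbound
  rw [Nat.card_Icc] at h
  have hcard : (n + 1 - 1 : ℕ) = n := by omega
  rw [hcard] at h
  have h' : θ n ≤ (n : ℝ) * ((n : ℝ) * Real.log 2) := by
    simpa [θ, nsmul_eq_mul] using h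
  have hn' : (1 : ℝ) ≤ (n : ℝ) := by exact_mod_cast hn
  have hn0 : (0 : ℝ) < n := by linarith
  nlinarith [mul_pos hn0 hn0, Real.log_nonneg (show (1:ℝ) ≤ 2 by norm_num)]

lemma theta_lower {n k : ℕ} (hk1 : 1 ≤ k) (hkn : k ≤ n) :
    (k : ℝ) * Real.log (p (n + 1 - k)) ≤ θ n := by
  have hsub : Finset.Icc (n + 1 - k) n ⊆ Finset.Icc 1 n := by
    apply Finset.Icc_subset_Icc _ le_rfl
    omega
  have h1 : ∀ i ∈ Finset.Icc (n + 1 - k) n, Real.log (p (n + 1 - k)) ≤ Real.log (p i) := by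
    intro i hi
    simp only [Finset.mem_Icc] at hi
    exact Real.log_le_log (by exact_mod_cast (p_prime _).pos) (by exact_mod_cast p_mono hi.1)
  have h2 := Finset.card_nsmul_le_sum (Finset.Icc (n + 1 - k) n)
      (fun i => Real.log (p i)) (Real.log (p (n + 1 - k))) h1
  rw [Nat.card_Icc] at h2
  have hcard : (n + 1 - (n + 1 - k) : ℕ) = k := by omega
  rw [hcard] at h2
  calc (k : ℝ) * Real.log (p (n + 1 - k)) = k • Real.log (p (n + 1 - k)) := by
        simp [nsmul_eq_mul]
    _ ≤ ∑ i ∈ Finset.Icc (n + 1 - k) n, Real.log (p i) := h2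
    _ ≤ θ n := Finset.sum_le_sum_of_subset_of_nonneg hsub
        (fun i _ _ => log_p_nonneg i)

lemma key_s13 {n : ℕ} (hn : 1 ≤ n) :
    Real.log (p (n + 1)) < 2 * Real.sqrt (θ n) + 1 := by
  set t := Real.sqrt (θ n) with ht
  have ha : 0 < θ n := theta_pos hn
  have ht0 : 0 < t := Real.sqrt_pos.mpr ha
  have ht2 : t ^ 2 = θ n := Real.sq_sqrt ha.le
  set k : ℕ := ⌊t⌋₊ + 1 with hk
  have hk1 : 1 ≤ k := by omega
  have hkt : (t : ℝ) < k := by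
    have := Nat.lt_floor_add_one t
    push_cast [hk]; linarith
  have hkt' : (k : ℝ) ≤ t + 1 := by
    have := Nat.floor_le ht0.le
    push_cast [hk]; linarith
  have hkn : k ≤ n := by
    have h1 : t < n := by
      have h2 : θ n < (n : ℝ) ^ 2 := theta_lt_sq hn
      have hn' : (0 : ℝ) < n := by exact_mod_cast hn
      nlinarith
    have : ⌊t⌋₊ < n := Nat.floor_lt ht0.le |>.mpr h1
    omega
  set j : ℕ := n + 1 - k with hj
  have hj1 : 1 ≤ j := by omega
  have hjk : j + k = n + 1 := by omega
  -- log p (n+1) ≤ k log 2 + log p j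
  have hps : p (n + 1) ≤ 2 ^ k * p j := by
    rw [← hjk]; exact p_shift hj1 k
  have hlog1 : Real.log (p (n + 1)) ≤ (k : ℝ) * Real.log 2 + Real.log (p j) := by
    calc Real.log (p (n + 1)) ≤ Real.log ((2 ^ k * p j : ℕ) : ℝ) := by
          apply Real.log_le_log (by exact_mod_cast (p_prime _).pos)
          exact_mod_cast hps
      _ = (k : ℝ) * Real.log 2 + Real.log (p j) := by
          rw [Nat.cast_mul, Nat.cast_pow,
            Real.log_mul (by positivity) (Nat.cast_ne_zero.mpr (p_prime j).pos.ne'),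
            Real.log_pow]
          norm_num
  -- log p j ≤ θ n / k ≤ t
  have hlow : (k : ℝ) * Real.log (p j) ≤ θ n := theta_lower hk1 hkn
  have hlog2 : Real.log (p j) ≤ t := by
    have hk0 : (0 : ℝ) < k := by exact_mod_cast hk1
    rw [← ht2] at hlow
    nlinarith [log_p_nonneg j]
  have hlog2lt : Real.log 2 < 1 := by have := Real.log_two_lt_d9; linarith
  have hlog2nn : (0 : ℝ) ≤ Real.log 2 := Real.log_nonneg (by norm_num)
  calc Real.log (p (n + 1)) ≤ (k : ℝ) * Real.log 2 + Real.log (p j) := hlog1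
    _ ≤ (t + 1) * Real.log 2 + t := by
        have := mul_le_mul_of_nonneg_right hkt' hlog2nn
        linarith
    _ < 2 * t + 1 := by nlinarith

theorem stmt13 : ∀ n : ℕ, 1 ≤ n → Real.sqrt (θ (n+1)) - Real.sqrt (θ n) < 1 := by
  intro n hn
  have ha : 0 < θ n := theta_pos hn
  have hsplit : θ (n + 1) = θ n + Real.log (p (n + 1)) := by
    rw [θ, θ, Finset.sum_Icc_succ_top (by omega : 1 ≤ n + 1)]
  have hkey := key_s13 hn
  rw [sub_lt_iff_lt_add, hsplit]
  have hy : (0 : ℝ) < 1 + Real.sqrt (θ n) := by positivity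
  have hlt : θ n + Real.log (p (n + 1)) < (1 + Real.sqrt (θ n)) ^ 2 := by
    nlinarith [Real.sq_sqrt ha.le, Real.sqrt_nonneg (θ n)]
  exact (Real.sqrt_lt' hy).mpr hlt
end
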